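/- Fix an effective divisor E on C of degree ≥ 2g + 1, put A = ⊕_{m=0}^∞ L(2mE), n = ℓ(E) = deg E − g + 1, and L = L(2E); for each divisor D of degree zero fix a 2E-form X_D representing D + E. Fix an E-compression functional ρ : L(4E) → k, Segre matrices X and X' of type (k, n, A, L), and divisors D and D' of degree zero such that X is k-equivalent to X_D and X' is k-equivalent to X_{D'}. Then for any n² × n² permutation matrices P and Q such that, for the block decomposition of P(X ∘ X')Q whose lower-right corner consists of blocks [[a, b], [c, d]] with a of size deg E × deg E and d of size n × n, the block z defined by [[w, x], [y, z]] = |ρa|·[[|ρa|, 0], [−(ρc)(ρa)^★, |ρa|]]·[[a, b], [c, d]]·[[|ρa|, −(ρa)^★(ρb)], [0, |ρa|]] is k-general, the matrix z is a Segre matrix of type (k, n, A, L), i.e., a 2E-form, and moreover z is k-equivalent to X_{D + D'}; in particular z represents E + D + D'. (Here ρa, ρb, ρc denote the matrices obtained by applying ρ entrywise, |·| denotes the determinant, and ★ the adjugate.) -/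

import Mathlib

/-- All 2×2 minors of a matrix vanish, i.e. the matrix has rank at most 1. -/
def MinorsVanish {R : Type} [CommRing R] {m n : Type} (M : Matrix m n R) : Prop :=
  ∀ i i' j j', M i j * M i' j' = M i j' * M i' j

/-- A matrix is `k`-general if some row and some column each consist of
`k`-linearly independent entries. -/
def KGeneral (k : Type) [Field k] {V : Type} [AddCommMonoid V] [Module k V]
    {m n : Type} (M : Matrix m n V) : Prop :=
  (∃ i, LinearIndependent k fun j => M i j) ∧ ∃ j, LinearIndependent k fun i => M i j

/-- Two matrices over a `k`-algebra are `k`-equivalent if `Y = Φ X Ψ` for some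
invertible square matrices `Φ`, `Ψ` with entries in `k`. -/
def KEquivalent (k : Type) [Field k] {A : Type} [CommRing A] [Algebra k A]
    {m n : Type} [Fintype m] [Fintype n] [DecidableEq m] [DecidableEq n]
    (X Y : Matrix m n A) : Prop :=
  ∃ (Φ : Matrix m m k) (Ψ : Matrix n n k), IsUnit Φ.det ∧ IsUnit Ψ.det ∧
    Y = Φ.map (algebraMap k A) * X * Ψ.map (algebraMap k A)

/-- An abstraction of a nonsingular projective curve `C` of genus `g` over an
algebraically closed field `k`, packaged together with its function field `F = k(C)`,
the divisor `div f` of a nonzero rational function (divisors are finitely supported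
`ℤ`-valued functions on the points of `C`), the Riemann–Roch spaces
`L(D) = {f : f = 0 ∨ div f + D ≥ 0}`, the rings `R_E` of functions regular near the
support of a divisor and the ideals `I_E` of functions vanishing to order at least `E`,
subject to the standard facts about them (including the Riemann–Roch theorem). -/
structure AbstractCurve (k : Type) [Field k] : Type 1 where
  /-- the points of the curve -/
  Point : Type
  /-- the function field `k(C)` -/
  F : Type
  [fieldF : Field F]
  [algF : Algebra k F]
  /-- the genus of the curve -/
  genus : ℕ
  /-- `divOf f` is the divisor of zeros and poles of `f` (junk value `0` at `f = 0`);
  its value at a point `p` is the order of vanishing of `f` at `p`. -/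
  divOf : F → (Point →₀ ℤ)
  divOf_mul : ∀ f g : F, f ≠ 0 → g ≠ 0 → divOf (f * g) = divOf f + divOf g
  divOf_algebraMap : ∀ c : k, c ≠ 0 → divOf (algebraMap k F c) = 0
  divOf_eq_zero_iff : ∀ f : F, f ≠ 0 →
    (divOf f = 0 ↔ ∃ c : k, c ≠ 0 ∧ f = algebraMap k F c)
  /-- a principal divisor has degree zero -/
  deg_divOf : ∀ f : F, f ≠ 0 → (divOf f).sum (fun _ n => n) = 0
  /-- the Riemann–Roch space `L(D)` as a `k`-subspace of the function field -/
  RR : (Point →₀ ℤ) → Submodule k F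
  mem_RR : ∀ (D : Point →₀ ℤ) (f : F), f ∈ RR D ↔ f = 0 ∨ 0 ≤ divOf f + D
  finite_RR : ∀ D : Point →₀ ℤ, Module.Finite k (RR D)
  /-- the Riemann–Roch theorem: `ℓ(D) = deg D - g + 1` whenever `deg D > 2g - 2` -/
  rank_RR : ∀ D : Point →₀ ℤ, 2 * (genus : ℤ) - 2 < D.sum (fun _ n => n) →
    (Module.finrank k (RR D) : ℤ) = D.sum (fun _ n => n) - genus + 1
  /-- the `k`-space `R_E` of functions regular in a neighborhood of the support of `E` -/
  Reg : (Point →₀ ℤ) → Submodule k F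
  mem_Reg : ∀ (E : Point →₀ ℤ) (f : F),
    f ∈ Reg E ↔ f = 0 ∨ ∀ p ∈ E.support, 0 ≤ divOf f p
  /-- the `k`-space `I_E ⊆ R_E` of functions vanishing to order at least `E` -/
  VanishIdeal : (Point →₀ ℤ) → Submodule k F
  mem_VanishIdeal : ∀ (E : Point →₀ ℤ) (f : F),
    f ∈ VanishIdeal E ↔ f = 0 ∨ ∀ p ∈ E.support, E p ≤ divOf f p

namespace AbstractCurve

attribute [instance] fieldF algF

variable {k : Type} [Field k]

/-- The degree of a divisor. -/
def deg (C : AbstractCurve k) (D : C.Point →₀ ℤ) : ℤ := D.sum fun _ n => n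

/-- Linear equivalence of divisors: `D ~ D'` iff `D' = D + div f` for some `f ≠ 0`. -/
def LinEquiv (C : AbstractCurve k) (D D' : C.Point →₀ ℤ) : Prop :=
  ∃ f : C.F, f ≠ 0 ∧ D' = D + C.divOf f

/-- A `G`-form: a square matrix with entries in `L(G)`, all of whose 2×2 minors vanish,
and which is `k`-general.  (In context its size is `n = ½ deg G - g + 1`.) -/
def IsGForm (C : AbstractCurve k) (G : C.Point →₀ ℤ) {n : ℕ}
    (X : Matrix (Fin n) (Fin n) C.F) : Prop :=
  (∀ i j, X i j ∈ C.RR G) ∧ MinorsVanish X ∧ KGeneral k X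

/-- The `G`-form `X` represents the divisor `D` (of degree `½ deg G`): `X = u v` where
the entries of the column vector `u` form a `k`-basis of `L(D)` and the entries of the
row vector `v` form a `k`-basis of `L(G - D)`. -/
def Represents (C : AbstractCurve k) (G D : C.Point →₀ ℤ) {n : ℕ}
    (X : Matrix (Fin n) (Fin n) C.F) : Prop :=
  ∃ u v : Fin n → C.F,
    LinearIndependent k u ∧ Submodule.span k (Set.range u) = C.RR D ∧
    LinearIndependent k v ∧ Submodule.span k (Set.range v) = C.RR (G - D) ∧
    ∀ i j, X i j = u i * v j

/-- An `E`-compression functional `ρ : L(G) → k` (realized as a `k`-linear functional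
on the function field): `ρ` kills `L(G - E)`, and for every divisor `D` of degree
`½ deg G` the induced pairing `(a, b) ↦ ρ(ab)` on
`L(D)/L(D-E) × L(G-D)/L(G-D-E)` is a perfect pairing of `(deg E)`-dimensional
`k`-vector spaces (expressed by nondegeneracy on both sides together with both
quotients having dimension `deg E`). -/
def IsCompression (C : AbstractCurve k) (G E : C.Point →₀ ℤ) (ρ : C.F →ₗ[k] k) : Prop :=
  (∀ f ∈ C.RR (G - E), ρ f = 0) ∧
  ∀ D : C.Point →₀ ℤ, 2 * C.deg D = C.deg G →
    (∀ a ∈ C.RR D, (∀ b ∈ C.RR (G - D), ρ (a * b) = 0) → a ∈ C.RR (D - E)) ∧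
    (∀ b ∈ C.RR (G - D), (∀ a ∈ C.RR D, ρ (a * b) = 0) → b ∈ C.RR (G - D - E)) ∧
    (Module.finrank k
      (C.RR D ⧸ Submodule.comap (C.RR D).subtype (C.RR (D - E))) : ℤ) = C.deg E ∧
    (Module.finrank k
      (C.RR (G - D) ⧸
        Submodule.comap (C.RR (G - D)).subtype (C.RR (G - D - E))) : ℤ) = C.deg E

end AbstractCurve
/-- The lower-right `q × q` block of an `N × N` matrix, `N = m + q`. -/
def lowerRightBlock {R : Type} {N m q : ℕ} (h : N = m + q)
    (M : Matrix (Fin N) (Fin N) R) : Matrix (Fin q) (Fin q) R :=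
  M.submatrix (fun i => (finCongr h.symm) (finSumFinEquiv (Sum.inr i)))
    (fun j => (finCongr h.symm) (finSumFinEquiv (Sum.inr j)))

/-- View an `N × N` matrix, `N = e + n`, as a block matrix indexed by `Fin e ⊕ Fin n`
(upper-left block of size `e × e`, lower-right block of size `n × n`). -/
def asBlocks {R : Type} {N e n : ℕ} (h : N = e + n)
    (M : Matrix (Fin N) (Fin N) R) : Matrix (Fin e ⊕ Fin n) (Fin e ⊕ Fin n) R :=
  M.submatrix (fun p => (finCongr h.symm) (finSumFinEquiv p))
    (fun p => (finCongr h.symm) (finSumFinEquiv p))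

/-- Given `n × n` matrices `X`, `X'` over `F`, permutations `σ`, `τ` of `Fin (n²)` and
a functional `ρ`, form `P (X ∘ X') Q` (`∘` the Kronecker product, `P`, `Q` the
permutation matrices of `σ`, `τ`), take the blocks `[[a, b], [c, d]]` in its
lower-right corner (`a` of size `e × e`, `d` of size `n × n`), and return the block `z`
from
`[[w, x], [y, z]] = |ρa| · [[|ρa|, 0], [-(ρc)(ρa)^★, |ρa|]] · [[a, b], [c, d]] · [[|ρa|, -(ρa)^★(ρb)], [0, |ρa|]]`,
where `ρ` is applied entrywise, `|·|` is the determinant and `★` the adjugate. -/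
noncomputable def compressedKroneckerBlock {k : Type} [Field k] {F : Type} [Field F]
    [Algebra k F] (e m n : ℕ) (h : n * n = m + (e + n))
    (X X' : Matrix (Fin n) (Fin n) F) (σ τ : Equiv.Perm (Fin (n * n)))
    (ρ : F →ₗ[k] k) : Matrix (Fin n) (Fin n) F :=
  let B := asBlocks (rfl : e + n = e + n)
    (lowerRightBlock h ((Matrix.reindex finProdFinEquiv finProdFinEquiv
      (Matrix.kroneckerMap (· * ·) X X')).submatrix σ τ))
  let a := B.toBlocks₁₁
  let b := B.toBlocks₁₂
  let c := B.toBlocks₂₁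
  let δ : k := (a.map ρ).det
  (δ • ((Matrix.fromBlocks (δ • 1) 0 (-(c.map ρ * (a.map ρ).adjugate)) (δ • 1)).map
        (algebraMap k F) * B *
      (Matrix.fromBlocks (δ • 1) (-((a.map ρ).adjugate * b.map ρ)) 0 (δ • 1)).map
        (algebraMap k F))).toBlocks₂₂

namespace AbstractCurve

variable {k : Type} [Field k] (C : AbstractCurve k)

lemma zero_mem_RR (A : C.Point →₀ ℤ) : (0 : C.F) ∈ C.RR A := by
  rw [C.mem_RR]; exact Or.inl rfl

lemma RR_mono {A B : C.Point →₀ ℤ} (h : A ≤ B) : C.RR A ≤ C.RR B := by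
  intro f hf
  rw [C.mem_RR] at hf ⊢
  rcases hf with hf | hf
  · exact Or.inl hf
  · exact Or.inr (le_trans hf (add_le_add_right h _))

lemma mul_mem_RR {A B : C.Point →₀ ℤ} {f g : C.F}
    (hf : f ∈ C.RR A) (hg : g ∈ C.RR B) : f * g ∈ C.RR (A + B) := by
  rcases eq_or_ne f 0 with rfl | hf0
  · simpa using C.zero_mem_RR _
  rcases eq_or_ne g 0 with rfl | hg0
  · simpa using C.zero_mem_RR _
  rw [C.mem_RR] at hf hg ⊢
  rcases hf with hf | hf
  · exact absurd hf hf0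
  rcases hg with hg | hg
  · exact absurd hg hg0
  refine Or.inr ?_
  rw [C.divOf_mul f g hf0 hg0]
  calc (0 : C.Point →₀ ℤ) = 0 + 0 := by rw [add_zero]
  _ ≤ (C.divOf f + A) + (C.divOf g + B) := add_le_add hf hg
  _ = C.divOf f + C.divOf g + (A + B) := by abel

lemma deg_add (A B : C.Point →₀ ℤ) : C.deg (A + B) = C.deg A + C.deg B := by
  unfold deg
  exact Finsupp.sum_add_index' (fun _ => rfl) (fun _ _ _ => rfl)

lemma deg_smul (m : ℕ) (A : C.Point →₀ ℤ) : C.deg (m • A) = m * C.deg A := by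
  induction m with
  | zero => simp [deg]
  | succ p ih =>
      rw [succ_nsmul, C.deg_add, ih]
      push_cast; ring

end AbstractCurve

section LinAlg

open Finset in
lemma sum_transform {k M : Type} [Field k] [AddCommGroup M] [Module k M] {n : ℕ}
    (Φ : Matrix (Fin n) (Fin n) k) (u : Fin n → M) (g : Fin n → k) :
    ∑ i, g i • (∑ j, Φ i j • u j) = ∑ j, (Matrix.vecMul g Φ) j • u j := by
  simp_rw [Finset.smul_sum, smul_smul, Matrix.vecMul, dotProduct,
    Finset.sum_smul]
  exact Finset.sum_comm

open Finset in
lemma linearIndependent_transform {k M : Type} [Field k] [AddCommGroup M] [Module k M]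
    {n : ℕ} {Φ : Matrix (Fin n) (Fin n) k} {u : Fin n → M}
    (hΦ : IsUnit Φ.det) (hu : LinearIndependent k u) :
    LinearIndependent k (fun i => ∑ j, Φ i j • u j) := by
  have : Invertible Φ := Φ.invertibleOfIsUnitDet hΦ
  rw [Fintype.linearIndependent_iff] at hu ⊢
  intro g hg i
  rw [sum_transform] at hg
  have hv : Matrix.vecMul g Φ = 0 := funext (hu _ hg)
  have : g = Matrix.vecMul (Matrix.vecMul g Φ) (⅟Φ) := by
    rw [Matrix.vecMul_vecMul, mul_invOf_self, Matrix.vecMul_one]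
  rw [hv] at this
  simp [this]

open Finset in
lemma span_transform {k M : Type} [Field k] [AddCommGroup M] [Module k M]
    {n : ℕ} {Φ : Matrix (Fin n) (Fin n) k} {u : Fin n → M}
    (hΦ : IsUnit Φ.det) :
    Submodule.span k (Set.range fun i => ∑ j, Φ i j • u j)
      = Submodule.span k (Set.range u) := by
  have : Invertible Φ := Φ.invertibleOfIsUnitDet hΦ
  apply le_antisymm
  · rw [Submodule.span_le]
    rintro _ ⟨i, rfl⟩
    exact Submodule.sum_mem _ fun j _ =>
      Submodule.smul_mem _ _ (Submodule.subset_span ⟨j, rfl⟩)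
  · rw [Submodule.span_le]
    rintro _ ⟨j, rfl⟩
    have : u j = ∑ i, (⅟Φ) j i • (∑ l, Φ i l • u l) := by
      rw [sum_transform Φ u ((⅟Φ) j)]
      have : Matrix.vecMul ((⅟Φ) j) Φ = (1 : Matrix (Fin n) (Fin n) k) j := by
        ext l
        rw [show ((⅟Φ) j) = fun i => (⅟Φ) j i from rfl]
        have := congrArg (fun M => M j l) (invOf_mul_self Φ)
        simpa [Matrix.mul_apply, Matrix.vecMul, dotProduct] using this
      rw [this]
      simp [Matrix.one_apply]
    rw [this]
    exact Submodule.sum_mem _ fun i _ =>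
      Submodule.smul_mem _ _ (Submodule.subset_span ⟨i, rfl⟩)

end LinAlg

section KEquiv

variable {k F : Type} [Field k] [Field F] [Algebra k F] {n : ℕ}

lemma map_invOf_mul (Φ : Matrix (Fin n) (Fin n) k) [Invertible Φ] :
    (⅟Φ).map (algebraMap k F) * Φ.map (algebraMap k F) = 1 := by
  rw [← Matrix.map_mul, invOf_mul_self, Matrix.map_one _ (map_zero _) (map_one _)]

lemma map_mul_invOf (Φ : Matrix (Fin n) (Fin n) k) [Invertible Φ] :
    Φ.map (algebraMap k F) * (⅟Φ).map (algebraMap k F) = 1 := by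
  rw [← Matrix.map_mul, mul_invOf_self, Matrix.map_one _ (map_zero _) (map_one _)]

lemma kequiv_symm {X Y : Matrix (Fin n) (Fin n) F} (h : KEquivalent k X Y) :
    KEquivalent k Y X := by
  obtain ⟨Φ, Ψ, hΦ, hΨ, heq⟩ := h
  have iΦ : Invertible Φ := Φ.invertibleOfIsUnitDet hΦ
  have iΨ : Invertible Ψ := Ψ.invertibleOfIsUnitDet hΨ
  refine ⟨⅟Φ, ⅟Ψ, Matrix.isUnit_det_of_invertible _, Matrix.isUnit_det_of_invertible _, ?_⟩
  rw [heq]; symm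
  calc (⅟Φ).map (algebraMap k F) * (Φ.map (algebraMap k F) * X * Ψ.map (algebraMap k F)) *
        (⅟Ψ).map (algebraMap k F)
      = ((⅟Φ).map (algebraMap k F) * Φ.map (algebraMap k F)) * X *
        (Ψ.map (algebraMap k F) * (⅟Ψ).map (algebraMap k F)) := by
        noncomm_ring
    _ = X := by rw [map_invOf_mul, map_mul_invOf, one_mul, mul_one]

open Finset in
lemma outer_conj (Φ Ψ : Matrix (Fin n) (Fin n) k) (u v : Fin n → F) :
    Φ.map (algebraMap k F) * (Matrix.of fun i j => u i * v j) * Ψ.map (algebraMap k F)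
      = Matrix.of fun i j => (∑ l, Φ i l • u l) * (∑ m, Ψ m j • v m) := by
  ext i j
  simp only [Matrix.mul_apply, Matrix.map_apply, Matrix.of_apply]
  rw [Finset.sum_mul_sum]
  rw [Finset.sum_comm]
  refine Finset.sum_congr rfl fun m _ => ?_
  rw [Finset.sum_mul]
  refine Finset.sum_congr rfl fun l _ => ?_
  rw [Algebra.smul_def, Algebra.smul_def]
  ring

end KEquiv

section Rep

variable {k : Type} [Field k]

open Finset in
lemma represents_of_kequiv {C : AbstractCurve k} {G D : C.Point →₀ ℤ} {n : ℕ}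
    {X Y : Matrix (Fin n) (Fin n) C.F} (hxy : KEquivalent k X Y)
    (hY : C.Represents G D Y) : C.Represents G D X := by
  obtain ⟨Φ, Ψ, hΦ, hΨ, heq⟩ := kequiv_symm hxy
  obtain ⟨u, v, hu1, hu2, hv1, hv2, huv⟩ := hY
  have hYo : Y = Matrix.of fun i j => u i * v j := Matrix.ext huv
  refine ⟨fun i => ∑ l, Φ i l • u l, fun j => ∑ m, Ψ.transpose j m • v m,
    linearIndependent_transform hΦ hu1, (span_transform hΦ).trans hu2,
    linearIndependent_transform (by rwa [Matrix.det_transpose]) hv1,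
    (span_transform (by rwa [Matrix.det_transpose])).trans hv2, ?_⟩
  intro i j
  rw [heq, hYo, outer_conj]
  simp [Matrix.transpose_apply]

open Submodule in
lemma exists_change_matrix {F : Type} [Field F] [Algebra k F] {n : ℕ}
    {u w : Fin n → F} {S : Submodule k F}
    (hu : LinearIndependent k u) (hsu : span k (Set.range u) = S)
    (hw : LinearIndependent k w) (hsw : span k (Set.range w) = S) :
    ∃ Φ : Matrix (Fin n) (Fin n) k, IsUnit Φ.det ∧ ∀ i, u i = ∑ j, Φ i j • w j := by
  have memu : ∀ i, u i ∈ S := fun i => hsu ▸ subset_span (Set.mem_range_self i)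
  have memw : ∀ i, w i ∈ S := fun i => hsw ▸ subset_span (Set.mem_range_self i)
  set ub : Fin n → S := fun i => ⟨u i, memu i⟩ with hub
  set wb : Fin n → S := fun i => ⟨w i, memw i⟩ with hwb
  have huli : LinearIndependent k ub := LinearIndependent.of_comp S.subtype (by exact hu)
  have hwli : LinearIndependent k wb := LinearIndependent.of_comp S.subtype (by exact hw)
  have spanu : span k (Set.range ub) = ⊤ := by
    apply Submodule.map_injective_of_injective S.injective_subtype
    rw [Submodule.map_span, ← Set.range_comp, Submodule.map_top, Submodule.range_subtype]
    exact hsu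
  have spanw : span k (Set.range wb) = ⊤ := by
    apply Submodule.map_injective_of_injective S.injective_subtype
    rw [Submodule.map_span, ← Set.range_comp, Submodule.map_top, Submodule.range_subtype]
    exact hsw
  let b₁ : Module.Basis (Fin n) k S := Module.Basis.mk huli (le_of_eq spanu.symm)
  let b₂ : Module.Basis (Fin n) k S := Module.Basis.mk hwli (le_of_eq spanw.symm)
  refine ⟨(b₂.toMatrix b₁).transpose, ?_, ?_⟩
  · rw [Matrix.det_transpose]
    have : Invertible (b₂.toMatrix b₁) := b₂.invertibleToMatrix b₁
    exact Matrix.isUnit_det_of_invertible _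
  · intro i
    have h1 : ∑ j, b₂.repr (ub i) j • b₂ j = ub i := b₂.sum_repr (ub i)
    have h2 : (ub i : F) = ∑ j, b₂.repr (ub i) j • w j := by
      conv_lhs => rw [← h1]
      push_cast
      refine Finset.sum_congr rfl fun j _ => ?_
      rw [show b₂ j = wb j from by simp [b₂, Module.Basis.mk_apply]]
    exact h2.trans (by
      refine Finset.sum_congr rfl fun j _ => ?_
      congr 1
      simp [Matrix.transpose_apply, Module.Basis.toMatrix_apply, b₁, Module.Basis.mk_apply])

end Rep

section BlockCompute

variable {k F : Type} [Field k] [Field F] [Algebra k F] {e n : ℕ}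

/-- pairing matrix a entrywise under ρ -/
noncomputable def pmA (W Z : Fin e ⊕ Fin n → F) (ρ : F →ₗ[k] k) :
    Matrix (Fin e) (Fin e) k := Matrix.of fun i j => ρ (W (Sum.inl i) * Z (Sum.inl j))

noncomputable def pmB (W Z : Fin e ⊕ Fin n → F) (ρ : F →ₗ[k] k) :
    Matrix (Fin e) (Fin n) k := Matrix.of fun i j => ρ (W (Sum.inl i) * Z (Sum.inr j))

noncomputable def pmC (W Z : Fin e ⊕ Fin n → F) (ρ : F →ₗ[k] k) :
    Matrix (Fin n) (Fin e) k := Matrix.of fun i j => ρ (W (Sum.inr i) * Z (Sum.inl j))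

noncomputable def pdel (W Z : Fin e ⊕ Fin n → F) (ρ : F →ₗ[k] k) : k := (pmA W Z ρ).det

noncomputable def utld (W Z : Fin e ⊕ Fin n → F) (ρ : F →ₗ[k] k) : Fin n → F := fun i =>
  algebraMap k F (pdel W Z ρ) * (algebraMap k F (pdel W Z ρ) * W (Sum.inr i)
    - ∑ l, algebraMap k F ((pmC W Z ρ * (pmA W Z ρ).adjugate) i l) * W (Sum.inl l))

noncomputable def vtld (W Z : Fin e ⊕ Fin n → F) (ρ : F →ₗ[k] k) : Fin n → F := fun j =>
  algebraMap k F (pdel W Z ρ) * Z (Sum.inr j)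
    - ∑ l, Z (Sum.inl l) * algebraMap k F (((pmA W Z ρ).adjugate * pmB W Z ρ) l j)

open Finset in
lemma triple_entry {ι : Type} [Fintype ι] (M₁ M₂ : Matrix ι ι F) (W Z : ι → F)
    (B : Matrix ι ι F) (hB : ∀ p q, B p q = W p * Z q) (p q : ι) :
    (M₁ * B * M₂) p q = (∑ r, M₁ p r * W r) * (∑ s, Z s * M₂ s q) := by
  simp only [Matrix.mul_apply]
  rw [Finset.sum_mul_sum, Finset.sum_comm]
  refine Finset.sum_congr rfl fun s _ => ?_
  rw [Finset.sum_mul]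
  refine Finset.sum_congr rfl fun r _ => ?_
  rw [hB]
  ring

open Finset in
lemma main_block_eq (W Z : Fin e ⊕ Fin n → F) (ρ : F →ₗ[k] k)
    (B : Matrix (Fin e ⊕ Fin n) (Fin e ⊕ Fin n) F) (hB : ∀ p q, B p q = W p * Z q) :
    ((B.toBlocks₁₁.map ρ).det •
      ((Matrix.fromBlocks ((B.toBlocks₁₁.map ρ).det • 1) 0
          (-(B.toBlocks₂₁.map ρ * (B.toBlocks₁₁.map ρ).adjugate))
          ((B.toBlocks₁₁.map ρ).det • 1)).map (algebraMap k F) * B *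
        (Matrix.fromBlocks ((B.toBlocks₁₁.map ρ).det • 1)
          (-((B.toBlocks₁₁.map ρ).adjugate * B.toBlocks₁₂.map ρ)) 0
          ((B.toBlocks₁₁.map ρ).det • 1)).map (algebraMap k F))).toBlocks₂₂
    = Matrix.of fun i j => utld W Z ρ i * vtld W Z ρ j := by
  have hA : B.toBlocks₁₁.map ρ = pmA W Z ρ := by
    ext i j; simp [Matrix.toBlocks₁₁, pmA, hB]
  have hBm : B.toBlocks₁₂.map ρ = pmB W Z ρ := by
    ext i j; simp [Matrix.toBlocks₁₂, pmB, hB]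
  have hCm : B.toBlocks₂₁.map ρ = pmC W Z ρ := by
    ext i j; simp [Matrix.toBlocks₂₁, pmC, hB]
  rw [hA, hBm, hCm]
  ext i j
  simp only [Matrix.toBlocks₂₂, Matrix.smul_apply, Matrix.of_apply]
  rw [triple_entry (hB := hB)]
  rw [Fintype.sum_sum_type, Fintype.sum_sum_type]
  simp only [Matrix.map_apply, Matrix.fromBlocks_apply₂₁, Matrix.fromBlocks_apply₂₂,
    Matrix.fromBlocks_apply₁₂, Matrix.zero_apply, Matrix.neg_apply, Matrix.smul_apply,
    Matrix.one_apply, smul_eq_mul, mul_ite, mul_one, mul_zero, map_neg, map_zero,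
    apply_ite (algebraMap k F), ite_mul, zero_mul, neg_mul, mul_neg,
    Finset.sum_ite_eq, Finset.sum_ite_eq', Finset.mem_univ, if_true,
    Finset.sum_neg_distrib]
  simp only [utld, vtld, pdel, Algebra.smul_def]
  ring

open Finset in
lemma rho_alg {k F : Type} [Field k] [Field F] [Algebra k F] (ρ : F →ₗ[k] k)
    (c : k) (x : F) : ρ (algebraMap k F c * x) = c * ρ x := by
  rw [← Algebra.smul_def, map_smul, smul_eq_mul]

open Finset in
lemma rho_utld_zero (W Z : Fin e ⊕ Fin n → F) (ρ : F →ₗ[k] k) (i : Fin n) (l : Fin e) :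
    ρ (utld W Z ρ i * Z (Sum.inl l)) = 0 := by
  have h1 : utld W Z ρ i * Z (Sum.inl l)
      = algebraMap k F (pdel W Z ρ) *
          (algebraMap k F (pdel W Z ρ) * (W (Sum.inr i) * Z (Sum.inl l))
        - ∑ m, algebraMap k F ((pmC W Z ρ * (pmA W Z ρ).adjugate) i m) *
            (W (Sum.inl m) * Z (Sum.inl l))) := by
    simp only [utld, ← mul_assoc, ← Finset.sum_mul]
    ring
  rw [h1, rho_alg, map_sub, rho_alg, map_sum]
  have h2 : ∀ m, ρ (algebraMap k F ((pmC W Z ρ * (pmA W Z ρ).adjugate) i m) *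
      (W (Sum.inl m) * Z (Sum.inl l)))
      = (pmC W Z ρ * (pmA W Z ρ).adjugate) i m * pmA W Z ρ m l := by
    intro m; rw [rho_alg]; rfl
  simp only [h2]
  have key : ∑ m, (pmC W Z ρ * (pmA W Z ρ).adjugate) i m * pmA W Z ρ m l
      = pdel W Z ρ * pmC W Z ρ i l := by
    rw [← Matrix.mul_apply, Matrix.mul_assoc, Matrix.adjugate_mul, Matrix.mul_smul,
      Matrix.mul_one, Matrix.smul_apply, smul_eq_mul, pdel]
  rw [key]
  have : ρ (W (Sum.inr i) * Z (Sum.inl l)) = pmC W Z ρ i l := rfl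
  rw [this]
  ring

open Finset in
lemma rho_vtld_zero (W Z : Fin e ⊕ Fin n → F) (ρ : F →ₗ[k] k) (m : Fin e) (j : Fin n) :
    ρ (W (Sum.inl m) * vtld W Z ρ j) = 0 := by
  have h1 : W (Sum.inl m) * vtld W Z ρ j
      = algebraMap k F (pdel W Z ρ) * (W (Sum.inl m) * Z (Sum.inr j))
        - ∑ l, algebraMap k F (((pmA W Z ρ).adjugate * pmB W Z ρ) l j) *
            (W (Sum.inl m) * Z (Sum.inl l)) := by
    simp only [vtld, mul_sub, Finset.mul_sum]
    exact congrArg₂ (· - ·) (by ring) (Finset.sum_congr rfl fun l _ => by ring)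
  rw [h1, map_sub, rho_alg, map_sum]
  have h2 : ∀ l, ρ (algebraMap k F (((pmA W Z ρ).adjugate * pmB W Z ρ) l j) *
      (W (Sum.inl m) * Z (Sum.inl l)))
      = pmA W Z ρ m l * ((pmA W Z ρ).adjugate * pmB W Z ρ) l j := by
    intro l; rw [rho_alg]
    have : ρ (W (Sum.inl m) * Z (Sum.inl l)) = pmA W Z ρ m l := rfl
    rw [this]; ring
  simp only [h2]
  have key : ∑ l, pmA W Z ρ m l * ((pmA W Z ρ).adjugate * pmB W Z ρ) l j
      = pdel W Z ρ * pmB W Z ρ m j := by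
    rw [← Matrix.mul_apply, ← Matrix.mul_assoc, Matrix.mul_adjugate, Matrix.smul_mul,
      Matrix.one_mul, Matrix.smul_apply, smul_eq_mul, pdel]
  rw [key]
  have : ρ (W (Sum.inl m) * Z (Sum.inr j)) = pmB W Z ρ m j := rfl
  rw [this]
  ring

open Submodule in
lemma exists_decomp_classes {e : ℕ} (S T : Submodule k F) [Module.Finite k S]
    (hrank : Module.finrank k (S ⧸ Submodule.comap S.subtype T) = e)
    (z : Fin e → F) (hz : ∀ l, z l ∈ S)
    (hind : ∀ c : Fin e → k, (∑ l, c l • z l) ∈ T → c = 0) :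
    ∀ b ∈ S, ∃ c : Fin e → k, b - ∑ l, c l • z l ∈ T := by
  set T' := Submodule.comap S.subtype T with hT'
  set ζ : Fin e → (S ⧸ T') := fun l => T'.mkQ ⟨z l, hz l⟩ with hζ
  have hcoe : ∀ (c : Fin e → k), ((∑ l, c l • (⟨z l, hz l⟩ : S) : S) : F)
      = ∑ l, c l • z l := by
    intro c; push_cast; rfl
  have hsum : ∀ c : Fin e → k, (∑ l, c l • ζ l)
      = T'.mkQ (∑ l, c l • (⟨z l, hz l⟩ : S)) := by
    intro c
    rw [map_sum]
    exact Finset.sum_congr rfl fun l _ => by rw [map_smul]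
  have hindζ : LinearIndependent k ζ := by
    rw [Fintype.linearIndependent_iff]
    intro c hc i
    rw [hsum c] at hc
    rw [Submodule.mkQ_apply, Submodule.Quotient.mk_eq_zero] at hc
    rw [hT', Submodule.mem_comap, Submodule.coe_subtype, hcoe] at hc
    exact congrFun (hind c hc) i
  have hfin : Module.Finite k (S ⧸ T') :=
    Module.Finite.of_surjective T'.mkQ (Submodule.mkQ_surjective T')
  have h1 : Module.finrank k (Submodule.span k (Set.range ζ)) = e := by
    rw [finrank_span_eq_card hindζ, Fintype.card_fin]
  have hsp : Submodule.span k (Set.range ζ) = ⊤ :=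
    Submodule.eq_top_of_finrank_eq (by rw [h1, hrank])
  intro b hb
  have hmem : T'.mkQ ⟨b, hb⟩ ∈ Submodule.span k (Set.range ζ) := by
    rw [hsp]; trivial
  rw [mem_span_range_iff_exists_fun] at hmem
  obtain ⟨c, hc⟩ := hmem
  refine ⟨c, ?_⟩
  have : T'.mkQ ((⟨b, hb⟩ : S) - ∑ l, c l • (⟨z l, hz l⟩ : S)) = 0 := by
    rw [map_sub, ← hsum, hc, sub_self]
  rw [Submodule.mkQ_apply, Submodule.Quotient.mk_eq_zero, hT', Submodule.mem_comap] at this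
  simpa [hcoe] using this

open Submodule in
lemma span_eq_of_finrank {n : ℕ} (u : Fin n → F) (S : Submodule k F) [Module.Finite k S]
    (hind : LinearIndependent k u) (hmem : ∀ i, u i ∈ S)
    (hfr : Module.finrank k S = n) :
    Submodule.span k (Set.range u) = S := by
  have hle : Submodule.span k (Set.range u) ≤ S := by
    rw [Submodule.span_le]
    rintro _ ⟨i, rfl⟩
    exact hmem i
  have h1 : Module.finrank k (Submodule.span k (Set.range u)) = n := by
    rw [finrank_span_eq_card hind, Fintype.card_fin]
  exact Submodule.eq_of_le_of_finrank_le hle (by rw [h1, hfr])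

end BlockCompute

namespace AbstractCurve

variable {k : Type} [Field k] (C : AbstractCurve k)

lemma deg_sub (A B : C.Point →₀ ℤ) : C.deg (A - B) = C.deg A - C.deg B := by
  have := C.deg_add (A - B) B
  rw [sub_add_cancel] at this
  omega

end AbstractCurve

open AbstractCurve in
/-- In the situation of the group-law construction (effective `E` of
degree `≥ 2g + 1`, `n = deg E - g + 1`, `X_D` a fixed `2E`-form representing `D + E`
for each degree-zero divisor `D`, `ρ : L(4E) → k` an `E`-compression functional, `X`,
`X'` Segre matrices of type `(k, n, ⊕ₘ L(2mE), L(2E))` that are `k`-equivalent to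
`X_D`, `X_{D'}` respectively), for **any** `n² × n²` permutation matrices `P`, `Q`
such that the block `z` obtained from the lower-right blocks `[[a, b], [c, d]]` of
`P (X ∘ X') Q` via
`[[w, x], [y, z]] = |ρa| · [[|ρa|, 0], [-(ρc)(ρa)^★, |ρa|]] · [[a, b], [c, d]] · [[|ρa|, -(ρa)^★(ρb)], [0, |ρa|]]`
is `k`-general, the matrix `z` is a Segre matrix of type `(k, n, ⊕ₘ L(2mE), L(2E))`,
i.e. a `2E`-form, and moreover `z` is `k`-equivalent to `X_{D + D'}`; in particular
`z` represents `E + D + D'`. -/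
theorem group_law_block_gform (k : Type) [Field k] [IsAlgClosed k]
    (C : AbstractCurve k) (E : C.Point →₀ ℤ) (hE : 0 ≤ E)
    (hdegE : 2 * (C.genus : ℤ) + 1 ≤ C.deg E)
    (e n : ℕ) (he : (e : ℤ) = C.deg E) (hn : (n : ℤ) = C.deg E - C.genus + 1)
    (XD : (C.Point →₀ ℤ) → Matrix (Fin n) (Fin n) C.F)
    (hXD : ∀ D : C.Point →₀ ℤ, C.deg D = 0 →
      C.IsGForm (2 • E) (XD D) ∧ C.Represents (2 • E) (D + E) (XD D))
    (ρ : C.F →ₗ[k] k) (hρ : C.IsCompression (4 • E) E ρ)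
    (D D' : C.Point →₀ ℤ) (hD : C.deg D = 0) (hD' : C.deg D' = 0)
    (X X' : Matrix (Fin n) (Fin n) C.F)
    (hX : C.IsGForm (2 • E) X) (hX' : C.IsGForm (2 • E) X')
    (hXeq : KEquivalent k X (XD D)) (hX'eq : KEquivalent k X' (XD D'))
    (m : ℕ) (h : n * n = m + (e + n)) (σ τ : Equiv.Perm (Fin (n * n)))
    (hgen : KGeneral k (compressedKroneckerBlock e m n h X X' σ τ ρ)) :
    C.IsGForm (2 • E) (compressedKroneckerBlock e m n h X X' σ τ ρ) ∧
      KEquivalent k (compressedKroneckerBlock e m n h X X' σ τ ρ) (XD (D + D')) ∧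
      C.Represents (2 • E) (E + D + D') (compressedKroneckerBlock e m n h X X' σ τ ρ) := by
  classical
  -- representations of X and X'
  obtain ⟨u₁, v₁, hu₁li, hu₁sp, hv₁li, hv₁sp, hX₁⟩ :=
    represents_of_kequiv hXeq (hXD D hD).2
  obtain ⟨u₂, v₂, hu₂li, hu₂sp, hv₂li, hv₂sp, hX₂⟩ :=
    represents_of_kequiv hX'eq (hXD D' hD').2
  -- the outer vectors of the Kronecker product
  set U : Fin (n * n) → C.F := fun i =>
    u₁ (finProdFinEquiv.symm (σ i)).1 * u₂ (finProdFinEquiv.symm (σ i)).2 with hU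
  set V : Fin (n * n) → C.F := fun j =>
    v₁ (finProdFinEquiv.symm (τ j)).1 * v₂ (finProdFinEquiv.symm (τ j)).2 with hV
  set emb : Fin e ⊕ Fin n → Fin (n * n) := fun p =>
    (finCongr h.symm) (finSumFinEquiv (Sum.inr
      ((finCongr (rfl : e + n = e + n).symm) (finSumFinEquiv p)))) with hemb
  set W : Fin e ⊕ Fin n → C.F := U ∘ emb with hW
  set Z : Fin e ⊕ Fin n → C.F := V ∘ emb with hZ
  set Bmat : Matrix (Fin e ⊕ Fin n) (Fin e ⊕ Fin n) C.F :=
    asBlocks (rfl : e + n = e + n)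
      (lowerRightBlock h ((Matrix.reindex finProdFinEquiv finProdFinEquiv
        (Matrix.kroneckerMap (· * ·) X X')).submatrix σ τ)) with hBmat
  have hBeq : ∀ p q, Bmat p q = W p * Z q := by
    intro p q
    simp only [hBmat, asBlocks, lowerRightBlock, Matrix.submatrix_apply,
      Matrix.reindex_apply, Matrix.kroneckerMap_apply, hW, hZ, hU, hV, hemb,
      Function.comp_apply, hX₁, hX₂]
    ring
  have hmain : compressedKroneckerBlock e m n h X X' σ τ ρ
      = Matrix.of fun i j => utld W Z ρ i * vtld W Z ρ j :=
    main_block_eq W Z ρ Bmat hBeq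
  set ut : Fin n → C.F := utld W Z ρ with hut
  set vt : Fin n → C.F := vtld W Z ρ with hvt
  have hzij : ∀ i j, compressedKroneckerBlock e m n h X X' σ τ ρ i j = ut i * vt j := by
    intro i j; rw [hmain]; rfl
  -- basic numerics
  have hg0 : (0 : ℤ) ≤ (C.genus : ℤ) := Int.natCast_nonneg _
  have hn1 : 0 < n := by omega
  obtain ⟨⟨i₀, hrow⟩, ⟨j₀, hcol⟩⟩ := hgen
  -- δ ≠ 0
  have hδ : pdel W Z ρ ≠ 0 := by
    intro h0
    have hzero : ut i₀ = 0 := by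
      rw [hut, utld, h0, map_zero, zero_mul]
    have := hrow.ne_zero i₀
    rw [hzij i₀ i₀, hzero, zero_mul] at this
    exact this rfl
  -- linear independence of the compressed vectors
  have hut_li : LinearIndependent k ut := by
    have hcol' := hcol
    rw [show (fun i => compressedKroneckerBlock e m n h X X' σ τ ρ i j₀)
        = (LinearMap.mulRight k (vt j₀)) ∘ ut from
      funext fun i => by simp [hzij, LinearMap.mulRight_apply]] at hcol'
    exact LinearIndependent.of_comp _ hcol'
  have hvt_li : LinearIndependent k vt := by
    have hrow' := hrow
    rw [show (fun j => compressedKroneckerBlock e m n h X X' σ τ ρ i₀ j)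
        = (LinearMap.mulLeft k (ut i₀)) ∘ vt from
      funext fun j => by simp [hzij, LinearMap.mulLeft_apply]] at hrow'
    exact LinearIndependent.of_comp _ hrow'
  -- divisors
  set D₀ : C.Point →₀ ℤ := (D + E) + (D' + E) with hD₀
  -- memberships
  have hu₁mem : ∀ i, u₁ i ∈ C.RR (D + E) := fun i =>
    hu₁sp ▸ Submodule.subset_span (Set.mem_range_self i)
  have hu₂mem : ∀ i, u₂ i ∈ C.RR (D' + E) := fun i =>
    hu₂sp ▸ Submodule.subset_span (Set.mem_range_self i)
  have hv₁mem : ∀ i, v₁ i ∈ C.RR (2 • E - (D + E)) := fun i =>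
    hv₁sp ▸ Submodule.subset_span (Set.mem_range_self i)
  have hv₂mem : ∀ i, v₂ i ∈ C.RR (2 • E - (D' + E)) := fun i =>
    hv₂sp ▸ Submodule.subset_span (Set.mem_range_self i)
  have hWmem : ∀ p, W p ∈ C.RR D₀ := fun p =>
    C.mul_mem_RR (hu₁mem _) (hu₂mem _)
  have hZdiv : (2 • E - (D + E)) + (2 • E - (D' + E)) = 4 • E - D₀ := by
    ext p
    simp only [Finsupp.coe_add, Finsupp.coe_sub, Finsupp.coe_smul, Pi.add_apply,
      Pi.sub_apply, Pi.smul_apply, smul_eq_mul, hD₀]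
    push_cast
    ring
  have hZmem : ∀ q, Z q ∈ C.RR (4 • E - D₀) := fun q =>
    hZdiv ▸ C.mul_mem_RR (hv₁mem _) (hv₂mem _)
  -- compression data
  have hdegD₀ : C.deg D₀ = C.deg E + C.deg E := by
    rw [hD₀, C.deg_add, C.deg_add, C.deg_add, hD, hD']
    ring
  have hdeg4E : C.deg (4 • E) = 4 * C.deg E := by
    rw [C.deg_smul]; push_cast; ring
  obtain ⟨hcomp1, hcomp2, hq1, hq2⟩ := hρ.2 D₀ (by rw [hdegD₀, hdeg4E]; ring)
  -- products landing in L(G - E) are killed by ρ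
  have hGE : ∀ {f g : C.F}, f ∈ C.RR D₀ → g ∈ C.RR (4 • E - D₀ - E) → ρ (f * g) = 0 := by
    intro f g hf hg
    apply hρ.1
    have := C.mul_mem_RR hf hg
    have hdiveq : D₀ + (4 • E - D₀ - E) = 4 • E - E := by
      ext p
      simp only [Finsupp.coe_add, Finsupp.coe_sub, Finsupp.coe_smul, Pi.add_apply,
        Pi.sub_apply, Pi.smul_apply, smul_eq_mul]
      ring
    rwa [hdiveq] at this
  have hGE' : ∀ {f g : C.F}, f ∈ C.RR (D₀ - E) → g ∈ C.RR (4 • E - D₀) → ρ (f * g) = 0 := by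
    intro f g hf hg
    apply hρ.1
    have := C.mul_mem_RR hf hg
    have hdiveq : (D₀ - E) + (4 • E - D₀) = 4 • E - E := by
      ext p
      simp only [Finsupp.coe_add, Finsupp.coe_sub, Finsupp.coe_smul, Pi.add_apply,
        Pi.sub_apply, Pi.smul_apply, smul_eq_mul]
      ring
    rwa [hdiveq] at this
  -- invertibility of the pairing matrix
  have hAunit : IsUnit (pmA W Z ρ).det := isUnit_iff_ne_zero.mpr hδ
  have hAinv : Invertible (pmA W Z ρ) := (pmA W Z ρ).invertibleOfIsUnitDet hAunit
  -- independence of classes of Z (Sum.inl _) and W (Sum.inl _)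
  have hindZ : ∀ c : Fin e → k,
      (∑ l, c l • Z (Sum.inl l)) ∈ C.RR (4 • E - D₀ - E) → c = 0 := by
    intro c hc
    have hmv : (pmA W Z ρ).mulVec c = 0 := by
      funext i
      have hexp : W (Sum.inl i) * (∑ l, c l • Z (Sum.inl l))
          = ∑ l, c l • (W (Sum.inl i) * Z (Sum.inl l)) := by
        rw [Finset.mul_sum]
        exact Finset.sum_congr rfl fun l _ => (mul_smul_comm _ _ _)
      have h0 : ρ (W (Sum.inl i) * (∑ l, c l • Z (Sum.inl l))) = 0 :=
        hGE (hWmem _) hc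
      rw [hexp, map_sum] at h0
      simp only [map_smul, smul_eq_mul] at h0
      simp only [Matrix.mulVec, dotProduct, Pi.zero_apply]
      show ∑ x, ρ (W (Sum.inl i) * Z (Sum.inl x)) * c x = 0
      rw [Finset.sum_congr rfl
        (g := fun l => c l * ρ (W (Sum.inl i) * Z (Sum.inl l)))
        (fun l _ => mul_comm _ _)]
      exact h0
    have : c = (⅟(pmA W Z ρ)).mulVec ((pmA W Z ρ).mulVec c) := by
      rw [Matrix.mulVec_mulVec, invOf_mul_self, Matrix.one_mulVec]
    rw [hmv, Matrix.mulVec_zero] at this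
    exact this
  have hindW : ∀ c : Fin e → k,
      (∑ l, c l • W (Sum.inl l)) ∈ C.RR (D₀ - E) → c = 0 := by
    intro c hc
    have hmv : Matrix.vecMul c (pmA W Z ρ) = 0 := by
      funext j
      have hexp : (∑ l, c l • W (Sum.inl l)) * Z (Sum.inl j)
          = ∑ l, c l • (W (Sum.inl l) * Z (Sum.inl j)) := by
        rw [Finset.sum_mul]
        exact Finset.sum_congr rfl fun l _ => (smul_mul_assoc _ _ _)
      have h0 : ρ ((∑ l, c l • W (Sum.inl l)) * Z (Sum.inl j)) = 0 :=
        hGE' hc (hZmem _)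
      rw [hexp, map_sum] at h0
      simp only [map_smul, smul_eq_mul] at h0
      simp only [Matrix.vecMul, dotProduct, Pi.zero_apply]
      show ∑ x, c x * ρ (W (Sum.inl x) * Z (Sum.inl j)) = 0
      exact h0
    have : c = Matrix.vecMul (Matrix.vecMul c (pmA W Z ρ)) (⅟(pmA W Z ρ)) := by
      rw [Matrix.vecMul_vecMul, mul_invOf_self, Matrix.vecMul_one]
    rw [hmv, Matrix.zero_vecMul] at this
    exact this
  -- quotient dimensions as naturals
  have hq1' : Module.finrank k
      (C.RR D₀ ⧸ Submodule.comap (C.RR D₀).subtype (C.RR (D₀ - E))) = e := by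
    exact_mod_cast hq1.trans he.symm
  have hq2' : Module.finrank k
      (C.RR (4 • E - D₀) ⧸ Submodule.comap (C.RR (4 • E - D₀)).subtype
        (C.RR (4 • E - D₀ - E))) = e := by
    exact_mod_cast hq2.trans he.symm
  -- membership of compressed vectors before compression
  haveI hfinD₀ : Module.Finite k (C.RR D₀) := C.finite_RR _
  haveI hfinGD₀ : Module.Finite k (C.RR (4 • E - D₀)) := C.finite_RR _
  have hutmemD₀ : ∀ i, ut i ∈ C.RR D₀ := by
    intro i
    rw [hut]
    simp only [utld, ← Algebra.smul_def]
    exact Submodule.smul_mem _ _ (Submodule.sub_mem _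
      (Submodule.smul_mem _ _ (hWmem _))
      (Submodule.sum_mem _ fun l _ => Submodule.smul_mem _ _ (hWmem _)))
  have hvtmemG : ∀ j, vt j ∈ C.RR (4 • E - D₀) := by
    intro j
    rw [hvt]
    simp only [vtld, ← Algebra.smul_def]
    refine Submodule.sub_mem _ (Submodule.smul_mem _ _ (hZmem _))
      (Submodule.sum_mem _ fun l _ => ?_)
    rw [mul_comm, ← Algebra.smul_def]
    exact Submodule.smul_mem _ _ (hZmem _)
  -- compression: the compressed vectors lie in the smaller Riemann-Roch spaces
  have hutmem : ∀ i, ut i ∈ C.RR (D₀ - E) := by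
    intro i
    apply hcomp1 _ (hutmemD₀ i)
    intro b hb
    obtain ⟨c, hc⟩ := exists_decomp_classes (C.RR (4 • E - D₀)) (C.RR (4 • E - D₀ - E))
      hq2' (fun l => Z (Sum.inl l)) (fun l => hZmem _) hindZ b hb
    have hs : ut i * (∑ l, c l • Z (Sum.inl l)) = ∑ l, c l • (ut i * Z (Sum.inl l)) := by
      rw [Finset.mul_sum]
      exact Finset.sum_congr rfl fun l _ => mul_smul_comm _ _ _
    have hsplit : ut i * b = ut i * (b - ∑ l, c l • Z (Sum.inl l))
        + ∑ l, c l • (ut i * Z (Sum.inl l)) := by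
      rw [← hs, mul_sub]
      ring
    rw [hsplit, map_add, map_sum]
    have h1 : ρ (ut i * (b - ∑ l, c l • Z (Sum.inl l))) = 0 := hGE (hutmemD₀ i) hc
    have h2 : ∀ l, ρ (ut i * Z (Sum.inl l)) = 0 := by
      intro l
      rw [hut]
      exact rho_utld_zero W Z ρ i l
    simp [h1, h2]
  have hvtmem : ∀ j, vt j ∈ C.RR (4 • E - D₀ - E) := by
    intro j
    apply hcomp2 _ (hvtmemG j)
    intro a ha
    obtain ⟨c, hc⟩ := exists_decomp_classes (C.RR D₀) (C.RR (D₀ - E))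
      hq1' (fun l => W (Sum.inl l)) (fun l => hWmem _) hindW a ha
    have hs : (∑ l, c l • W (Sum.inl l)) * vt j = ∑ l, c l • (W (Sum.inl l) * vt j) := by
      rw [Finset.sum_mul]
      exact Finset.sum_congr rfl fun l _ => smul_mul_assoc _ _ _
    have hsplit : a * vt j = (a - ∑ l, c l • W (Sum.inl l)) * vt j
        + ∑ l, c l • (W (Sum.inl l) * vt j) := by
      rw [← hs, sub_mul]
      ring
    rw [hsplit, map_add, map_sum]
    have h1 : ρ ((a - ∑ l, c l • W (Sum.inl l)) * vt j) = 0 := hGE' hc (hvtmemG j)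
    have h2 : ∀ l, ρ (W (Sum.inl l) * vt j) = 0 := by
      intro l
      rw [hvt]
      exact rho_vtld_zero W Z ρ l j
    simp [h1, h2]
  -- dimensions of the target Riemann-Roch spaces
  have hdegD₀E : C.deg (D₀ - E) = C.deg E := by
    rw [C.deg_sub, hdegD₀]; ring
  have hdegGD₀E : C.deg (4 • E - D₀ - E) = C.deg E := by
    rw [C.deg_sub, C.deg_sub, hdeg4E, hdegD₀]; ring
  have hfr1 : Module.finrank k (C.RR (D₀ - E)) = n := by
    have hRR := C.rank_RR (D₀ - E) (by
      rw [show ((D₀ - E).sum fun _ x => x) = C.deg (D₀ - E) from rfl, hdegD₀E]; omega)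
    rw [show ((D₀ - E).sum fun _ x => x) = C.deg (D₀ - E) from rfl, hdegD₀E] at hRR
    have h2 : (Module.finrank k (C.RR (D₀ - E)) : ℤ) = (n : ℤ) := by rw [hRR, hn]
    exact_mod_cast h2
  have hfr2 : Module.finrank k (C.RR (4 • E - D₀ - E)) = n := by
    have hRR := C.rank_RR (4 • E - D₀ - E) (by
      rw [show ((4 • E - D₀ - E).sum fun _ x => x) = C.deg (4 • E - D₀ - E) from rfl,
        hdegGD₀E]; omega)
    rw [show ((4 • E - D₀ - E).sum fun _ x => x) = C.deg (4 • E - D₀ - E) from rfl,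
      hdegGD₀E] at hRR
    have h2 : (Module.finrank k (C.RR (4 • E - D₀ - E)) : ℤ) = (n : ℤ) := by rw [hRR, hn]
    exact_mod_cast h2
  haveI : Module.Finite k (C.RR (D₀ - E)) := C.finite_RR _
  haveI : Module.Finite k (C.RR (4 • E - D₀ - E)) := C.finite_RR _
  have hspu : Submodule.span k (Set.range ut) = C.RR (D₀ - E) :=
    span_eq_of_finrank ut _ hut_li hutmem hfr1
  have hspv : Submodule.span k (Set.range vt) = C.RR (4 • E - D₀ - E) :=
    span_eq_of_finrank vt _ hvt_li hvtmem hfr2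
  -- divisor identities
  have d1 : D₀ - E = E + D + D' := by
    ext p
    simp only [hD₀, Finsupp.coe_add, Finsupp.coe_sub, Pi.add_apply, Pi.sub_apply]
    ring
  have d2 : 4 • E - D₀ - E = 2 • E - (E + D + D') := by
    ext p
    simp only [hD₀, Finsupp.coe_add, Finsupp.coe_sub, Finsupp.coe_smul, Pi.add_apply,
      Pi.sub_apply, Pi.smul_apply, smul_eq_mul]
    ring
  have d3 : (D₀ - E) + (4 • E - D₀ - E) = 2 • E := by
    ext p
    simp only [hD₀, Finsupp.coe_add, Finsupp.coe_sub, Finsupp.coe_smul, Pi.add_apply,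
      Pi.sub_apply, Pi.smul_apply, smul_eq_mul]
    ring
  have d4 : (D + D') + E = D₀ - E := by rw [d1]; abel
  have d5 : 2 • E - ((D + D') + E) = 4 • E - D₀ - E := by
    ext p
    simp only [hD₀, Finsupp.coe_add, Finsupp.coe_sub, Finsupp.coe_smul, Pi.add_apply,
      Pi.sub_apply, Pi.smul_apply, smul_eq_mul]
    ring
  -- final assembly
  refine ⟨⟨?_, ?_, ⟨⟨i₀, hrow⟩, ⟨j₀, hcol⟩⟩⟩, ?_, ?_⟩
  · intro i j
    rw [hzij]
    have := C.mul_mem_RR (hutmem i) (hvtmem j)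
    rwa [d3] at this
  · intro i i' j j'
    rw [hzij, hzij, hzij, hzij]
    ring
  · -- k-equivalence with XD (D + D')
    have hdd' : C.deg (D + D') = 0 := by rw [C.deg_add, hD, hD']; ring
    obtain ⟨u₃, v₃, hu₃li, hu₃sp, hv₃li, hv₃sp, hXD₃⟩ := (hXD (D + D') hdd').2
    have hu₃sp' : Submodule.span k (Set.range u₃) = C.RR (D₀ - E) :=
      hu₃sp.trans (congrArg C.RR d4)
    have hv₃sp' : Submodule.span k (Set.range v₃) = C.RR (4 • E - D₀ - E) :=
      hv₃sp.trans (congrArg C.RR d5)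
    obtain ⟨Φ, hΦu, hΦ⟩ := exists_change_matrix hut_li hspu hu₃li hu₃sp'
    obtain ⟨Ψ, hΨu, hΨ⟩ := exists_change_matrix hvt_li hspv hv₃li hv₃sp'
    apply kequiv_symm
    refine ⟨Φ, Ψ.transpose, hΦu, by rwa [Matrix.det_transpose], ?_⟩
    have hXDo : XD (D + D') = Matrix.of fun i j => u₃ i * v₃ j := Matrix.ext hXD₃
    rw [hXDo, outer_conj]
    ext i j
    show compressedKroneckerBlock e m n h X X' σ τ ρ i j
      = (∑ l, Φ i l • u₃ l) * (∑ m', Ψ.transpose m' j • v₃ m')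
    rw [hzij, hΦ i]
    congr 1
    rw [hΨ j]
    exact Finset.sum_congr rfl fun m' _ => rfl
  · exact ⟨ut, vt, hut_li, hspu.trans (congrArg C.RR d1), hvt_li,
      hspv.trans (congrArg C.RR d2), hzij⟩
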